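/- Let 0 < r < a, set f(t) = a + r·cos(t/r), K(t) = −f''(t)/f(t), t̃ = πr/2, and h̃ = f'(t̃)/f(t̃). Then 3·K(t̃)·(1 − f(t̃)) + 3·f(t̃)²·(h̃·K'(t̃) − K''(t̃)) + 5·f(t̃)⁴·K'(t̃)² = (5a² + 9r²)/r⁴, which is strictly positive. -/

import Mathlib

/-- On the standard torus `f(t) = a + r cos(t/r)`, at `t̃ = πr/2` with
`K = −f''/f` and `h̃ = f'(t̃)/f(t̃)`, the period-derivative quantity of
Lemma 3.5 equals `(5a² + 9r²)/r⁴ > 0`. -/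
theorem stmt_11 (a r : ℝ) (hr : 0 < r) (hra : r < a)
    (f K : ℝ → ℝ) (hf : ∀ t, f t = a + r * Real.cos (t / r))
    (hK : ∀ t, K t = -(deriv (deriv f) t) / f t) :
    3 * K (Real.pi * r / 2) * (1 - f (Real.pi * r / 2)) +
      3 * f (Real.pi * r / 2) ^ 2 *
        ((deriv f (Real.pi * r / 2) / f (Real.pi * r / 2)) * deriv K (Real.pi * r / 2) -
          deriv (deriv K) (Real.pi * r / 2)) +
      5 * f (Real.pi * r / 2) ^ 4 * (deriv K (Real.pi * r / 2)) ^ 2 =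
      (5 * a ^ 2 + 9 * r ^ 2) / r ^ 4 ∧
    0 < (5 * a ^ 2 + 9 * r ^ 2) / r ^ 4 := by
  have hrne : r ≠ 0 := ne_of_gt hr
  have hapos : 0 < a := lt_trans hr hra
  have hane : a ≠ 0 := ne_of_gt hapos
  set t0 : ℝ := Real.pi * r / 2 with ht0
  have ht0r : t0 / r = Real.pi / 2 := by
    rw [ht0]; field_simp
  have hc0 : Real.cos (t0 / r) = 0 := by rw [ht0r]; exact Real.cos_pi_div_two
  have hs0 : Real.sin (t0 / r) = 1 := by rw [ht0r]; exact Real.sin_pi_div_two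
  have hfe : f = fun t => a + r * Real.cos (t / r) := funext hf
  have hid : ∀ t : ℝ, HasDerivAt (fun t : ℝ => t / r) (1 / r) t := by
    intro t; simpa using (hasDerivAt_id t).div_const r
  have hcosd : ∀ t : ℝ, HasDerivAt (fun t : ℝ => Real.cos (t / r))
      (-Real.sin (t / r) * (1 / r)) t :=
    fun t => by have h := (Real.hasDerivAt_cos (t / r)).comp t (hid t); exact h
  have hsind : ∀ t : ℝ, HasDerivAt (fun t : ℝ => Real.sin (t / r))
      (Real.cos (t / r) * (1 / r)) t :=
    fun t => by have h := (Real.hasDerivAt_sin (t / r)).comp t (hid t); exact h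
  have hfd : ∀ t, HasDerivAt f (-Real.sin (t / r)) t := by
    intro t
    rw [hfe]
    have h3 := ((hcosd t).const_mul r).const_add a
    refine h3.congr_deriv ?_
    field_simp
  have hdf : deriv f = fun t => -Real.sin (t / r) := funext fun t => (hfd t).deriv
  have hddf : ∀ t, deriv (deriv f) t = -(Real.cos (t / r) / r) := by
    intro t
    rw [hdf]
    have := (hsind t).neg
    have h2 : HasDerivAt (fun t => -Real.sin (t / r)) (-(Real.cos (t / r) / r)) t := by
      refine this.congr_deriv ?_; field_simp
    exact h2.deriv
  have hfpos : ∀ t, (0:ℝ) < a + r * Real.cos (t / r) := by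
    intro t; nlinarith [Real.neg_one_le_cos (t / r)]
  have hKe : K = fun t => (Real.cos (t / r) / r) / (a + r * Real.cos (t / r)) := by
    funext t
    rw [hK t, hddf t, hfe]
    ring
  have hnum : ∀ t, HasDerivAt (fun t => Real.cos (t / r) / r)
      (-Real.sin (t / r) / r / r) t := by
    intro t
    have := (hcosd t).div_const r
    refine this.congr_deriv ?_
    field_simp
  have hden : ∀ t, HasDerivAt (fun t => a + r * Real.cos (t / r)) (-Real.sin (t / r)) t := by
    intro t
    have := hfd t
    rwa [hfe] at this
  have hKd : ∀ t, HasDerivAt K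
      (((-Real.sin (t / r) / r / r) * (a + r * Real.cos (t / r)) -
        (Real.cos (t / r) / r) * (-Real.sin (t / r))) / (a + r * Real.cos (t / r)) ^ 2) t := by
    intro t
    rw [hKe]
    exact (hnum t).div (hden t) (ne_of_gt (hfpos t))
  have hdK : deriv K = fun t =>
      ((-Real.sin (t / r) / r / r) * (a + r * Real.cos (t / r)) -
        (Real.cos (t / r) / r) * (-Real.sin (t / r))) / (a + r * Real.cos (t / r)) ^ 2 :=
    funext fun t => (hKd t).deriv
  -- second derivative of K at t0
  have hsneg : ∀ t : ℝ, HasDerivAt (fun t => -Real.sin (t / r) / r / r)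
      (-(Real.cos (t / r) * (1 / r)) / r / r) t :=
    fun t => (((hsind t).neg).div_const r).div_const r
  have hN : HasDerivAt (fun t =>
      (-Real.sin (t / r) / r / r) * (a + r * Real.cos (t / r)) -
        (Real.cos (t / r) / r) * (-Real.sin (t / r)))
      ((-(Real.cos (t0 / r) * (1 / r)) / r / r) * (a + r * Real.cos (t0 / r)) +
        (-Real.sin (t0 / r) / r / r) * (-Real.sin (t0 / r)) -
        ((-Real.sin (t0 / r) / r / r) * (-Real.sin (t0 / r)) +
          (Real.cos (t0 / r) / r) * (-(Real.cos (t0 / r) * (1 / r))))) t0 := by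
    exact ((hsneg t0).mul (hden t0)).sub ((hnum t0).mul ((hsind t0).neg))
  have hD : HasDerivAt (fun t => (a + r * Real.cos (t / r)) ^ 2)
      (2 * (a + r * Real.cos (t0 / r)) ^ 1 * (-Real.sin (t0 / r))) t0 :=
    (hden t0).pow 2
  have hddK : deriv (deriv K) t0 = -(2 / (r ^ 2 * a ^ 2)) := by
    rw [hdK]
    have h := hN.div hD (by positivity)
    erw [h.deriv]
    rw [hc0, hs0]
    field_simp
    ring
  have hv1 : f t0 = a := by rw [hf t0, hc0]; ring
  have hv2 : deriv f t0 = -1 := by rw [hdf]; simp [hs0]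
  have hv3 : K t0 = 0 := by rw [hKe]; simp [hc0]
  have hv4 : deriv K t0 = -(1 / (r ^ 2 * a)) := by
    rw [hdK]; simp only [hc0, hs0]; field_simp; ring
  rw [hv1, hv2, hv3, hv4, hddK]
  constructor
  · field_simp
    ring
  · apply div_pos
    · nlinarith
    · positivity
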